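/- (Markov–Lukács, even case.) Let $p$ be a univariate real polynomial of degree at most $2k$. Then $p(x)\geq 0$ for all $x\in[0,1]$ if and only if there exist polynomials $a$ of degree at most $k$ and $b$ of degree at most $k-1$ such that $p(x) = a(x)^2 + x(1-x)b(x)^2$. -/

import Mathlib

open Polynomial Set Filter ComplexConjugate

namespace ML

noncomputable section

/-- `Rep k p`: `p = a² + X(1-X) b²` with degree bounds. -/
def Rep (k : ℕ) (p : ℝ[X]) : Prop :=
  ∃ a b : ℝ[X], a.degree ≤ (k : ℕ) ∧ b.degree < (k : ℕ) ∧
    p = a ^ 2 + X * (1 - X) * b ^ 2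

lemma wb_add_one_le {x : WithBot ℕ} {n : ℕ} (h : x < (n : WithBot ℕ)) :
    x + 1 ≤ (n : WithBot ℕ) := by
  cases x with
  | bot => simp
  | coe m =>
      rw [Nat.cast_withBot] at h ⊢
      have : m < n := WithBot.coe_lt_coe.mp h
      rw [← WithBot.coe_one, ← WithBot.coe_add]
      exact WithBot.coe_le_coe.mpr this

lemma wb_lt_of_add_one_le {x : WithBot ℕ} {n : ℕ} (h : x + 1 ≤ (n : WithBot ℕ)) :
    x < (n : WithBot ℕ) := by
  cases x with
  | bot => exact WithBot.bot_lt_coe n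
  | coe m =>
      rw [Nat.cast_withBot] at h ⊢
      rw [← WithBot.coe_one, ← WithBot.coe_add] at h
      exact WithBot.coe_lt_coe.mpr (by have := WithBot.coe_le_coe.mp h; omega)

lemma nonneg_closure (q : ℝ[X]) {s : Set ℝ} (h : ∀ x ∈ s, 0 ≤ q.eval x)
    {x : ℝ} (hx : x ∈ closure s) : 0 ≤ q.eval x := by
  have hcl : IsClosed {y : ℝ | 0 ≤ q.eval y} :=
    isClosed_le continuous_const q.continuous
  exact hcl.closure_subset_iff.mpr (fun y hy => h y hy) hx

lemma quot_nonneg {p f q : ℝ[X]} (hfac : p = f * q)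
    (hp : ∀ x ∈ Icc (0:ℝ) 1, 0 ≤ p.eval x)
    (hf : ∀ x ∈ Ioo (0:ℝ) 1, 0 < f.eval x) :
    ∀ x ∈ Icc (0:ℝ) 1, 0 ≤ q.eval x := by
  have h' : ∀ x ∈ Ioo (0:ℝ) 1, 0 ≤ q.eval x := by
    intro x hx
    have h1 := hp x (Ioo_subset_Icc_self hx)
    rw [hfac, eval_mul] at h1
    nlinarith [hf x hx]
  intro x hx
  exact nonneg_closure q h'
    (by rw [closure_Ioo (by norm_num : (0:ℝ) ≠ 1)]; exact hx)


lemma rep_mono {k l : ℕ} (h : k ≤ l) {p : ℝ[X]} (hp : Rep k p) : Rep l p := by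
  obtain ⟨a, b, ha, hb, he⟩ := hp
  have hkl : ((k : ℕ) : WithBot ℕ) ≤ (l : ℕ) := by exact_mod_cast h
  exact ⟨a, b, ha.trans hkl, lt_of_lt_of_le hb hkl, he⟩

lemma degree_w_le : (X * (1 - X) : ℝ[X]).degree ≤ 2 := by
  refine (degree_mul_le _ _).trans ?_
  have h1 : (1 - X : ℝ[X]).degree ≤ 1 :=
    (degree_sub_le _ _).trans (by simp [degree_one, degree_X])
  calc (X : ℝ[X]).degree + (1 - X : ℝ[X]).degree ≤ 1 + 1 := by
        exact add_le_add (le_of_eq degree_X) h1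
    _ = 2 := by norm_cast

lemma rep_mul {k : ℕ} {f q : ℝ[X]} (hf : Rep 1 f) (hq : Rep k q) :
    Rep (k + 1) (f * q) := by
  obtain ⟨a0, b0, ha0, hb0, he0⟩ := hf
  obtain ⟨a1, b1, ha1, hb1, he1⟩ := hq
  refine ⟨a0 * a1 - X * (1 - X) * (b0 * b1), a0 * b1 + a1 * b0, ?_, ?_, ?_⟩
  · refine (degree_sub_le _ _).trans (max_le ?_ ?_)
    · refine (degree_mul_le _ _).trans ?_
      calc a0.degree + a1.degree ≤ (1 : ℕ) + (k : ℕ) := add_le_add ha0 ha1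
        _ = ((k + 1 : ℕ) : WithBot ℕ) := by rw [← Nat.cast_add, Nat.add_comm]
    · refine (degree_mul_le _ _).trans ?_
      have hb0' : b0.degree + 1 ≤ ((1 : ℕ) : WithBot ℕ) := wb_add_one_le hb0
      have hb1' : b1.degree + 1 ≤ ((k : ℕ) : WithBot ℕ) := wb_add_one_le hb1
      have hw2 : (X * (1 - X) : ℝ[X]).degree ≤ (1 : WithBot ℕ) + 1 := by
        refine degree_w_le.trans (le_of_eq ?_)
        norm_num
      calc (X * (1 - X) : ℝ[X]).degree + (b0 * b1).degree
          ≤ ((1 : WithBot ℕ) + 1) + (b0.degree + b1.degree) := add_le_add hw2 (degree_mul_le _ _)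
        _ = (b0.degree + 1) + (b1.degree + 1) := by abel
        _ ≤ ((1 : ℕ) : WithBot ℕ) + ((k : ℕ) : WithBot ℕ) := add_le_add hb0' hb1'
        _ = ((k + 1 : ℕ) : WithBot ℕ) := by rw [← Nat.cast_add, Nat.add_comm]
  · apply wb_lt_of_add_one_le
    have h1 : (a0 * b1).degree + 1 ≤ ((k + 1 : ℕ) : WithBot ℕ) := by
      have hb1' : b1.degree + 1 ≤ ((k : ℕ) : WithBot ℕ) := wb_add_one_le hb1
      calc (a0 * b1).degree + 1 ≤ (a0.degree + b1.degree) + 1 :=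
            add_le_add_left (degree_mul_le _ _) 1
        _ = a0.degree + (b1.degree + 1) := by abel
        _ ≤ ((1 : ℕ) : WithBot ℕ) + ((k : ℕ) : WithBot ℕ) := add_le_add ha0 hb1'
        _ = ((k + 1 : ℕ) : WithBot ℕ) := by rw [← Nat.cast_add, Nat.add_comm]
    have h2 : (a1 * b0).degree + 1 ≤ ((k + 1 : ℕ) : WithBot ℕ) := by
      have hb0' : b0.degree + 1 ≤ ((1 : ℕ) : WithBot ℕ) := wb_add_one_le hb0
      calc (a1 * b0).degree + 1 ≤ (a1.degree + b0.degree) + 1 :=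
            add_le_add_left (degree_mul_le _ _) 1
        _ = a1.degree + (b0.degree + 1) := by abel
        _ ≤ ((k : ℕ) : WithBot ℕ) + ((1 : ℕ) : WithBot ℕ) := add_le_add ha1 hb0'
        _ = ((k + 1 : ℕ) : WithBot ℕ) := by rw [← Nat.cast_add]
    calc (a0 * b1 + a1 * b0).degree + 1
        ≤ max (a0 * b1).degree (a1 * b0).degree + 1 :=
          add_le_add_left (degree_add_le _ _) 1
      _ = max ((a0 * b1).degree + 1) ((a1 * b0).degree + 1) := by
          rw [max_add_add_right]
      _ ≤ ((k + 1 : ℕ) : WithBot ℕ) := max_le h1 h2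
  · rw [he0, he1]; ring

/-- Representation of quadratics from coefficient data. -/
lemma rep_one {u v w : ℝ} (h : ∃ α β γ : ℝ, α ^ 2 - γ ^ 2 = u ∧ 2 * α * β + γ ^ 2 = v ∧ β ^ 2 = w) :
    Rep 1 (C u * X ^ 2 + C v * X + C w) := by
  obtain ⟨α, β, γ, h1, h2, h3⟩ := h
  refine ⟨C α * X + C β, C γ, ?_, ?_, ?_⟩
  · exact_mod_cast degree_linear_le
  · exact lt_of_le_of_lt degree_C_le (by exact_mod_cast WithBot.coe_lt_coe.mpr Nat.zero_lt_one)
  · rw [← h1, ← h2, ← h3]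
    simp only [map_sub, map_add, map_mul, map_pow, map_ofNat]
    ring


lemma rep_lin_left {r : ℝ} (hr : r ≤ 0) : Rep 1 (X - C r) := by
  have hpoly : (X - C r : ℝ[X]) = C 0 * X ^ 2 + C 1 * X + C (-r) := by
    simp only [map_zero, map_one, map_neg, zero_mul, zero_add, one_mul]
    ring
  rw [hpoly]
  apply rep_one
  set β := Real.sqrt (-r) with hβdef
  have hβ : β ^ 2 = -r := Real.sq_sqrt (by linarith)
  have ht : (Real.sqrt (β ^ 2 + 1)) ^ 2 = β ^ 2 + 1 := Real.sq_sqrt (by positivity)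
  refine ⟨Real.sqrt (β ^ 2 + 1) - β, β, Real.sqrt (β ^ 2 + 1) - β, by ring, ?_, hβ⟩
  linear_combination ht

lemma rep_lin_right {s : ℝ} (hs : 1 ≤ s) : Rep 1 (C s - X) := by
  have hpoly : (C s - X : ℝ[X]) = C 0 * X ^ 2 + C (-1) * X + C s := by
    simp only [map_zero, map_one, map_neg, zero_mul, zero_add, one_mul]
    ring
  rw [hpoly]
  apply rep_one
  have hβ : (Real.sqrt s) ^ 2 = s := Real.sq_sqrt (by linarith)
  have ht : (Real.sqrt (s - 1)) ^ 2 = s - 1 := Real.sq_sqrt (by linarith)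
  exact ⟨Real.sqrt (s - 1) - Real.sqrt s, Real.sqrt s, Real.sqrt (s - 1) - Real.sqrt s,
    by ring, by linear_combination ht - hβ, hβ⟩

lemma rep_monic_quad {pc qc : ℝ} (h : ∀ x ∈ Icc (0:ℝ) 1, 0 ≤ x ^ 2 + pc * x + qc) :
    Rep 1 (X ^ 2 + C pc * X + C qc) := by
  have hpoly : (X ^ 2 + C pc * X + C qc : ℝ[X]) = C 1 * X ^ 2 + C pc * X + C qc := by
    simp only [map_one, one_mul]
  rw [hpoly]
  apply rep_one
  have h0 : 0 ≤ qc := by have := h 0 (by constructor <;> norm_num); nlinarith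
  have h1 : 0 ≤ 1 + pc + qc := by have := h 1 (by constructor <;> norm_num); nlinarith
  set s1 := Real.sqrt (qc * (qc + pc + 1)) with hs1def
  have hs1 : s1 ^ 2 = qc * (qc + pc + 1) := Real.sq_sqrt (mul_nonneg h0 (by linarith))
  have hs1' : 0 ≤ s1 := Real.sqrt_nonneg _
  have hg : 0 ≤ pc + 2 * qc + 2 * s1 := by
    rcases le_or_gt 0 (pc + 2 * qc) with hc | hc
    · linarith
    · have hpc : pc < 0 := by nlinarith
      have hqc1 : qc < 1 := by nlinarith
      have hmem : -pc / 2 ∈ Icc (0:ℝ) 1 := by constructor <;> [nlinarith; nlinarith]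
      have hq4 : pc ^ 2 ≤ 4 * qc := by have := h _ hmem; nlinarith
      nlinarith [hs1, hs1', hq4, sq_nonneg (2 * s1 + pc + 2 * qc)]
  have hβ : (Real.sqrt qc) ^ 2 = qc := Real.sq_sqrt h0
  have ht : (Real.sqrt (qc + pc + 1)) ^ 2 = qc + pc + 1 := Real.sq_sqrt (by linarith)
  have hγ : (Real.sqrt (pc + 2 * qc + 2 * s1)) ^ 2 = pc + 2 * qc + 2 * s1 := Real.sq_sqrt hg
  have hbt : Real.sqrt qc * Real.sqrt (qc + pc + 1) = s1 := by
    rw [hs1def, Real.sqrt_mul h0]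
  refine ⟨-(Real.sqrt qc + Real.sqrt (qc + pc + 1)), Real.sqrt qc,
    Real.sqrt (pc + 2 * qc + 2 * s1), ?_, ?_, hβ⟩
  · linear_combination hβ + ht - hγ + 2 * hbt
  · linear_combination -2 * hβ - 2 * hbt + hγ

lemma rep_neg_quad {r s : ℝ} (hr : r ≤ 0) (hs : 1 ≤ s) :
    Rep 1 ((X - C r) * (C s - X)) := by
  have hpoly : ((X - C r) * (C s - X) : ℝ[X]) =
      C (-1) * X ^ 2 + C (r + s) * X + C (-(r * s)) := by
    simp only [map_neg, map_one, map_add, map_mul]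
    ring
  rw [hpoly]
  apply rep_one
  have hrs : 0 ≤ -(r * s) := by nlinarith
  set β := Real.sqrt (-(r * s)) with hβdef
  have hβ : β ^ 2 = -(r * s) := Real.sq_sqrt hrs
  have harg : 0 ≤ β ^ 2 + r + s - 1 := by nlinarith
  set u := Real.sqrt (β ^ 2 + r + s - 1) with hudef
  have hu : u ^ 2 = β ^ 2 + r + s - 1 := Real.sq_sqrt harg
  have hγ : (Real.sqrt ((u - β) ^ 2 + 1)) ^ 2 = (u - β) ^ 2 + 1 := Real.sq_sqrt (by positivity)
  refine ⟨u - β, β, Real.sqrt ((u - β) ^ 2 + 1), by linear_combination -hγ, ?_, hβ⟩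
  linear_combination hγ + hu


lemma exists_root_of_odd (P : ℝ[X]) (h : Odd P.natDegree) : ∃ r : ℝ, P.IsRoot r := by
  have hP0 : P ≠ 0 := by
    rintro rfl; simp [Nat.odd_iff] at h
  suffices H : ∀ Q : ℝ[X], Odd Q.natDegree → 0 < Q.leadingCoeff → ∃ r : ℝ, Q.IsRoot r by
    rcases lt_trichotomy P.leadingCoeff 0 with h1 | h1 | h1
    · obtain ⟨r, hr⟩ := H (-P) (by simpa using h) (by simpa using h1)
      exact ⟨r, by simpa [IsRoot] using hr⟩
    · exact absurd (leadingCoeff_eq_zero.mp h1) hP0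
    · exact H P h h1
  intro Q hodd hlc
  have hq0 : Q.natDegree ≠ 0 := by
    rintro h0; rw [h0] at hodd; simp [Nat.odd_iff] at hodd
  have hdeg : 0 < Q.degree := natDegree_pos_iff_degree_pos.mp (Nat.pos_of_ne_zero hq0)
  have hT := tendsto_atTop_of_leadingCoeff_nonneg Q hdeg hlc.le
  obtain ⟨b, hb⟩ := (hT.eventually_ge_atTop 1).exists
  set Q2 := Q.comp (-X) with hQ2
  have hd2 : Q2.natDegree = Q.natDegree := by
    rw [hQ2, natDegree_comp]; simp
  have hdeg2 : 0 < Q2.degree := by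
    rw [← natDegree_pos_iff_degree_pos, hd2]; exact Nat.pos_of_ne_zero hq0
  have hlc2 : Q2.leadingCoeff ≤ 0 := by
    rw [hQ2, leadingCoeff_comp (by simp)]
    have : (-X : ℝ[X]).leadingCoeff = -1 := by simp
    rw [this, hodd.neg_one_pow]
    linarith
  have hB := tendsto_atBot_of_leadingCoeff_nonpos Q2 hdeg2 hlc2
  obtain ⟨a, ha⟩ := (hB.eventually_le_atBot (-1)).exists
  have ha' : Q.eval (-a) ≤ -1 := by
    have : Q2.eval a = Q.eval (-a) := by rw [hQ2, eval_comp]; simp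
    linarith [this ▸ ha]
  have hc : ContinuousOn (fun x => Q.eval x) (uIcc (-a) b) := Q.continuous.continuousOn
  have h0 : (0:ℝ) ∈ uIcc (Q.eval (-a)) (Q.eval b) := by
    rw [Set.mem_uIcc]; left; constructor <;> linarith
  obtain ⟨r, _, hr⟩ := intermediate_value_uIcc hc h0
  exact ⟨r, hr⟩


lemma exists_quad_factor (p : ℝ[X]) (hd : 0 < p.natDegree)
    (hnr : ∀ r : ℝ, ¬ p.IsRoot r) :
    ∃ c d : ℝ, (X ^ 2 + C c * X + C d) ∣ p ∧ ∀ x : ℝ, 0 < x ^ 2 + c * x + d := by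
  have hinj : Function.Injective (algebraMap ℝ ℂ) := (algebraMap ℝ ℂ).injective
  have hdegC : 0 < (p.map (algebraMap ℝ ℂ)).degree := by
    rw [degree_map_eq_of_injective hinj]
    exact natDegree_pos_iff_degree_pos.mp hd
  obtain ⟨z, hz⟩ := Complex.exists_root hdegC
  have hzroot : aeval z p = 0 := by rwa [aeval_def, ← eval_map]
  have him : z.im ≠ 0 := by
    intro h
    apply hnr z.re
    have hz' : ((z.re : ℂ)) = z := Complex.ext rfl (by simp [h])
    have hfz : (algebraMap ℝ ℂ) (eval z.re p) = 0 := by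
      rw [← Polynomial.eval₂_at_apply, ← eval_map]
      have hz'' : (algebraMap ℝ ℂ) z.re = z := hz'
      rw [hz'']
      exact hz
    exact hinj (by simpa using hfz)
  have hne : z ≠ conj z := fun hEq => him (Complex.conj_eq_iff_im.mp hEq.symm)
  refine ⟨-(2 * z.re), z.re ^ 2 + z.im ^ 2, ?_, ?_⟩
  · set g : ℝ[X] := X ^ 2 + C (-(2 * z.re)) * X + C (z.re ^ 2 + z.im ^ 2) with hgdef
    have hgm : g.Monic := by
      rw [hgdef, add_assoc]
      apply monic_X_pow_add
      refine lt_of_le_of_lt degree_linear_le ?_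
      exact_mod_cast (by norm_num : ((1:ℕ) : WithBot ℕ) < ((2:ℕ) : WithBot ℕ))
    have h1 : z + conj z = ((2 * z.re : ℝ) : ℂ) := Complex.add_conj z
    have h2 : z * conj z = ((z.re ^ 2 + z.im ^ 2 : ℝ) : ℂ) := by
      rw [Complex.mul_conj]
      norm_cast
      simp [Complex.normSq_apply]
      ring
    have hmap : g.map (algebraMap ℝ ℂ) = (X - C z) * (X - C (conj z)) := by
      have : ∀ r : ℝ, (algebraMap ℝ ℂ) r = (r : ℂ) := fun r => rfl
      simp only [hgdef, Polynomial.map_add, Polynomial.map_mul, Polynomial.map_pow,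
        map_X, map_C, this]
      rw [show ((-(2 * z.re) : ℝ) : ℂ) = -(z + conj z) by rw [h1]; push_cast; ring,
        show ((z.re ^ 2 + z.im ^ 2 : ℝ) : ℂ) = z * conj z by rw [h2]]
      simp only [map_sub, map_neg, map_mul, map_add]
      ring
    have hdvd1 : (X - C z) ∣ p.map (algebraMap ℝ ℂ) := dvd_iff_isRoot.mpr hz
    have hdvd2 : (X - C (conj z)) ∣ p.map (algebraMap ℝ ℂ) := by
      apply dvd_iff_isRoot.mpr
      rw [IsRoot, eval_map, ← aeval_def, Polynomial.aeval_conj, hzroot, map_zero]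
    have hcop : IsCoprime (X - C z) (X - C (conj z)) :=
      isCoprime_X_sub_C_of_isUnit_sub (IsUnit.mk0 _ (sub_ne_zero.2 hne))
    have := hcop.mul_dvd hdvd1 hdvd2
    rw [← hmap] at this
    exact (map_dvd_map _ hinj hgm).mp this
  · intro x
    have h2 : 0 < z.im ^ 2 := lt_of_le_of_ne (sq_nonneg _) (Ne.symm (pow_ne_zero 2 him))
    nlinarith [sq_nonneg (x - z.re)]


lemma bot_lt_cast (n : ℕ) : (⊥ : WithBot ℕ) < ((n : ℕ) : WithBot ℕ) := by
  rw [Nat.cast_withBot]; exact WithBot.bot_lt_coe n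

lemma rep_sq_lin (r : ℝ) : Rep 1 ((X - C r) * (X - C r)) := by
  refine ⟨X - C r, 0, ?_, ?_, by ring⟩
  · rw [degree_X_sub_C]; exact_mod_cast le_refl _
  · rw [degree_zero]; exact bot_lt_cast 1

lemma main (k : ℕ) : ∀ p : ℝ[X], p.natDegree ≤ 2 * k →
    (∀ x ∈ Icc (0:ℝ) 1, 0 ≤ p.eval x) → Rep k p := by
  induction k with
  | zero =>
      intro p hd hnn
      obtain ⟨c, hc⟩ : ∃ c, p = C c := ⟨_, eq_C_of_natDegree_le_zero (by omega)⟩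
      have h0 : 0 ≤ c := by
        have := hnn 0 (by constructor <;> norm_num)
        rwa [hc, eval_C] at this
      refine ⟨C (Real.sqrt c), 0, degree_C_le.trans (by exact_mod_cast le_refl _), ?_, ?_⟩
      · rw [degree_zero]; exact bot_lt_cast 0
      · rw [hc, ← map_pow, Real.sq_sqrt h0]; simp
  | succ k IH =>
      intro p hd hnn
      by_cases hp0 : p = 0
      · subst hp0
        exact ⟨0, 0, by simp [degree_zero],
          by rw [degree_zero]; exact bot_lt_cast _, by simp⟩
      by_cases hd' : p.natDegree ≤ 2 * k
      · exact rep_mono (Nat.le_succ k) (IH p hd' hnn)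
      push_neg at hd'
      by_cases hroot : ∃ r ∈ Ioo (0:ℝ) 1, p.IsRoot r
      · -- interior root: double root
        obtain ⟨r, hrIoo, hr⟩ := hroot
        set q1 := p /ₘ (X - C r) with hq1def
        have hfac1 : p = (X - C r) * q1 := (mul_divByMonic_eq_iff_isRoot.mpr hr).symm
        have hq1r : q1.IsRoot r := by
          have hup : 0 ≤ q1.eval r := by
            apply nonneg_closure q1 (s := Ioo r 1) ?_
              (by rw [closure_Ioo (ne_of_lt hrIoo.2)]; exact ⟨le_refl r, hrIoo.2.le⟩)
            intro x hx
            have h1 := hnn x ⟨(hrIoo.1.trans hx.1).le, hx.2.le⟩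
            rw [hfac1, eval_mul] at h1
            simp only [eval_sub, eval_X, eval_C] at h1
            nlinarith [hx.1]
          have hdn : 0 ≤ (-q1).eval r := by
            apply nonneg_closure (-q1) (s := Ioo 0 r) ?_
              (by rw [closure_Ioo (ne_of_lt hrIoo.1)]; exact ⟨hrIoo.1.le, le_refl r⟩)
            intro x hx
            have h1 := hnn x ⟨hx.1.le, (hx.2.trans hrIoo.2).le⟩
            rw [hfac1, eval_mul] at h1
            simp only [eval_sub, eval_X, eval_C] at h1
            simp only [eval_neg]
            nlinarith [hx.2]
          simp only [eval_neg] at hdn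
          show q1.eval r = 0
          linarith
        set q2 := q1 /ₘ (X - C r) with hq2def
        have hfac2 : q1 = (X - C r) * q2 := (mul_divByMonic_eq_iff_isRoot.mpr hq1r).symm
        have hq1d : q1.natDegree = p.natDegree - 1 := by
          rw [hq1def, natDegree_divByMonic p (monic_X_sub_C r), natDegree_X_sub_C]
        have hq2d : q2.natDegree ≤ 2 * k := by
          rw [hq2def, natDegree_divByMonic q1 (monic_X_sub_C r), natDegree_X_sub_C, hq1d]
          omega
        have hfacf : p = ((X - C r) * (X - C r)) * q2 := by rw [hfac1, hfac2]; ring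
        have hq2nn : ∀ x ∈ Icc (0:ℝ) 1, 0 ≤ q2.eval x := by
          intro x hx
          rcases le_or_gt x r with hxr | hxr
          · apply nonneg_closure q2 (s := Ioo 0 r) ?_
              (by rw [closure_Ioo (ne_of_lt hrIoo.1)]; exact ⟨hx.1, hxr⟩)
            intro y hy
            have h1 := hnn y ⟨hy.1.le, (hy.2.trans hrIoo.2).le⟩
            rw [hfacf, eval_mul, eval_mul] at h1
            simp only [eval_sub, eval_X, eval_C] at h1
            nlinarith [mul_pos_of_neg_of_neg (show y - r < 0 by linarith [hy.2])
              (show y - r < 0 by linarith [hy.2])]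
          · apply nonneg_closure q2 (s := Ioo r 1) ?_
              (by rw [closure_Ioo (ne_of_lt hrIoo.2)]; exact ⟨hxr.le, hx.2⟩)
            intro y hy
            have h1 := hnn y ⟨(hrIoo.1.trans hy.1).le, hy.2.le⟩
            rw [hfacf, eval_mul, eval_mul] at h1
            simp only [eval_sub, eval_X, eval_C] at h1
            nlinarith [mul_pos (show (0:ℝ) < y - r by linarith [hy.1])
              (show (0:ℝ) < y - r by linarith [hy.1])]
        have := rep_mul (rep_sq_lin r) (IH q2 hq2d hq2nn)
        rwa [← hfacf] at this
      · -- no interior root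
        push_neg at hroot
        have hpos : ∀ x ∈ Ioo (0:ℝ) 1, 0 < p.eval x := by
          intro x hx
          rcases (hnn x (Ioo_subset_Icc_self hx)).lt_or_eq with h | h
          · exact h
          · exact absurd h.symm (hroot x hx)
        have hside : ∀ t : ℝ, p.IsRoot t → t ≤ 0 ∨ 1 ≤ t := by
          intro t ht
          by_contra hcon
          push_neg at hcon
          exact hroot t ⟨hcon.1, hcon.2⟩ ht
        rcases Nat.even_or_odd p.natDegree with hev | hodd
        · -- even degree = 2k+2
          have hdeq : p.natDegree = 2 * k + 2 := by
            obtain ⟨m, hm⟩ := hev; omega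
          by_cases hre : ∃ t : ℝ, p.IsRoot t
          · obtain ⟨r, hr⟩ := hre
            set q1 := p /ₘ (X - C r) with hq1def
            have hfac1 : p = (X - C r) * q1 := (mul_divByMonic_eq_iff_isRoot.mpr hr).symm
            have hq1d : q1.natDegree = 2 * k + 1 := by
              rw [hq1def, natDegree_divByMonic p (monic_X_sub_C r), natDegree_X_sub_C]; omega
            obtain ⟨s, hs⟩ := exists_root_of_odd q1 (by rw [hq1d]; exact ⟨k, by omega⟩)
            have hsp : p.IsRoot s := by
              have hs0 : q1.eval s = 0 := hs
              show p.eval s = 0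
              rw [hfac1, eval_mul, hs0, mul_zero]
            set q2 := q1 /ₘ (X - C s) with hq2def
            have hfac2 : q1 = (X - C s) * q2 := (mul_divByMonic_eq_iff_isRoot.mpr hs).symm
            have hq2d : q2.natDegree ≤ 2 * k := by
              rw [hq2def, natDegree_divByMonic q1 (monic_X_sub_C s), natDegree_X_sub_C, hq1d]
              omega
            have hq2d' : (-q2).natDegree ≤ 2 * k := by rwa [natDegree_neg]
            rcases hside r hr with hrL | hrR <;> rcases hside s hsp with hsL | hsR
            · -- r ≤ 0, s ≤ 0
              have hfacf : p = ((X - C r) * (X - C s)) * q2 := by rw [hfac1, hfac2]; ring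
              have hfeq : (X - C r) * (X - C s) = X ^ 2 + C (-(r + s)) * X + C (r * s) := by
                simp only [map_neg, map_add, map_mul]; ring
              have hfrep : Rep 1 ((X - C r) * (X - C s)) := by
                rw [hfeq]
                apply rep_monic_quad
                intro x hx
                nlinarith [mul_nonneg (by linarith [hx.1] : (0:ℝ) ≤ x - r)
                  (by linarith [hx.1] : (0:ℝ) ≤ x - s)]
              have hfpos : ∀ x ∈ Ioo (0:ℝ) 1, 0 < ((X - C r) * (X - C s)).eval x := by
                intro x hx
                simp only [eval_mul, eval_sub, eval_X, eval_C]
                exact mul_pos (by linarith [hx.1]) (by linarith [hx.1])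
              have := rep_mul hfrep (IH q2 hq2d (quot_nonneg hfacf hnn hfpos))
              rwa [← hfacf] at this
            · -- r ≤ 0, 1 ≤ s
              have hfacf : p = ((X - C r) * (C s - X)) * (-q2) := by rw [hfac1, hfac2]; ring
              have hfpos : ∀ x ∈ Ioo (0:ℝ) 1, 0 < ((X - C r) * (C s - X)).eval x := by
                intro x hx
                simp only [eval_mul, eval_sub, eval_X, eval_C]
                exact mul_pos (by linarith [hx.1]) (by linarith [hx.2])
              have := rep_mul (rep_neg_quad hrL hsR) (IH (-q2) hq2d' (quot_nonneg hfacf hnn hfpos))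
              rwa [← hfacf] at this
            · -- s ≤ 0, 1 ≤ r
              have hfacf : p = ((X - C s) * (C r - X)) * (-q2) := by rw [hfac1, hfac2]; ring
              have hfpos : ∀ x ∈ Ioo (0:ℝ) 1, 0 < ((X - C s) * (C r - X)).eval x := by
                intro x hx
                simp only [eval_mul, eval_sub, eval_X, eval_C]
                exact mul_pos (by linarith [hx.1]) (by linarith [hx.2])
              have := rep_mul (rep_neg_quad hsL hrR) (IH (-q2) hq2d' (quot_nonneg hfacf hnn hfpos))
              rwa [← hfacf] at this
            · -- 1 ≤ r, 1 ≤ s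
              have hfacf : p = ((X - C r) * (X - C s)) * q2 := by rw [hfac1, hfac2]; ring
              have hfeq : (X - C r) * (X - C s) = X ^ 2 + C (-(r + s)) * X + C (r * s) := by
                simp only [map_neg, map_add, map_mul]; ring
              have hfrep : Rep 1 ((X - C r) * (X - C s)) := by
                rw [hfeq]
                apply rep_monic_quad
                intro x hx
                nlinarith [mul_nonneg (by linarith [hx.2] : (0:ℝ) ≤ r - x)
                  (by linarith [hx.2] : (0:ℝ) ≤ s - x)]
              have hfpos : ∀ x ∈ Ioo (0:ℝ) 1, 0 < ((X - C r) * (X - C s)).eval x := by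
                intro x hx
                simp only [eval_mul, eval_sub, eval_X, eval_C]
                exact mul_pos_of_neg_of_neg (by linarith [hx.2]) (by linarith [hx.2])
              have := rep_mul hfrep (IH q2 hq2d (quot_nonneg hfacf hnn hfpos))
              rwa [← hfacf] at this
          · -- no real root
            push_neg at hre
            obtain ⟨c, d, hdvd, hposq⟩ := exists_quad_factor p (by omega) hre
            set g : ℝ[X] := X ^ 2 + C c * X + C d with hgdef
            have hgm : g.Monic := by
              rw [hgdef, add_assoc]
              apply monic_X_pow_add
              refine lt_of_le_of_lt degree_linear_le ?_
              exact_mod_cast (by norm_num : ((1:ℕ) : WithBot ℕ) < ((2:ℕ) : WithBot ℕ))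
            have hmod : p %ₘ g = 0 := (modByMonic_eq_zero_iff_dvd hgm).mpr hdvd
            have hfacf : p = g * (p /ₘ g) := by
              have h := modByMonic_add_div p g
              rw [hmod, zero_add] at h
              exact h.symm
            have hgdeg : g.natDegree = 2 := by
              have hdg : g.degree = 2 := by
                rw [hgdef, add_assoc]
                rw [degree_add_eq_left_of_degree_lt]
                · exact degree_X_pow 2
                · rw [degree_X_pow]
                  refine lt_of_le_of_lt degree_linear_le ?_
                  exact_mod_cast (by norm_num : ((1:ℕ) : WithBot ℕ) < ((2:ℕ) : WithBot ℕ))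
              exact natDegree_eq_of_degree_eq_some hdg
            have hq2d : (p /ₘ g).natDegree ≤ 2 * k := by
              rw [natDegree_divByMonic p hgm, hgdeg]; omega
            have hfpos : ∀ x ∈ Ioo (0:ℝ) 1, 0 < g.eval x := by
              intro x _
              have := hposq x
              simp only [hgdef, eval_add, eval_mul, eval_pow, eval_X, eval_C]
              linarith
            have hfrep : Rep 1 g := by
              rw [hgdef]
              exact rep_monic_quad (fun x _ => (hposq x).le)
            have := rep_mul hfrep (IH (p /ₘ g) hq2d (quot_nonneg hfacf hnn hfpos))
            rwa [← hfacf] at this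
        · -- odd degree = 2k+1
          have hdeq : p.natDegree = 2 * k + 1 := by
            obtain ⟨m, hm⟩ := hodd; omega
          obtain ⟨t, ht⟩ := exists_root_of_odd p hodd
          set q1 := p /ₘ (X - C t) with hq1def
          have hfac1 : p = (X - C t) * q1 := (mul_divByMonic_eq_iff_isRoot.mpr ht).symm
          have hq1d : q1.natDegree ≤ 2 * k := by
            rw [hq1def, natDegree_divByMonic p (monic_X_sub_C t), natDegree_X_sub_C]; omega
          rcases hside t ht with hL | hR
          · have hfpos : ∀ x ∈ Ioo (0:ℝ) 1, 0 < (X - C t).eval x := by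
              intro x hx
              simp only [eval_sub, eval_X, eval_C]
              linarith [hx.1]
            have := rep_mul (rep_lin_left hL) (IH q1 hq1d (quot_nonneg hfac1 hnn hfpos))
            rwa [← hfac1] at this
          · have hfacf : p = (C t - X) * (-q1) := by rw [hfac1]; ring
            have hq1d' : (-q1).natDegree ≤ 2 * k := by rwa [natDegree_neg]
            have hfpos : ∀ x ∈ Ioo (0:ℝ) 1, 0 < (C t - X).eval x := by
              intro x hx
              simp only [eval_sub, eval_X, eval_C]
              linarith [hx.2]
            have := rep_mul (rep_lin_right hR) (IH (-q1) hq1d' (quot_nonneg hfacf hnn hfpos))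
            rwa [← hfacf] at this

end
end ML

open Polynomial

theorem markov_lukacs_even (k : ℕ) (p : Polynomial ℝ)
    (hdeg : p.degree ≤ (2 * k : ℕ)) :
    (∀ x ∈ Set.Icc (0 : ℝ) 1, 0 ≤ p.eval x) ↔
      ∃ a b : Polynomial ℝ,
        a.degree ≤ (k : ℕ) ∧ b.degree < (k : ℕ) ∧
        p = a ^ 2 + X * (1 - X) * b ^ 2 := by
  constructor
  · intro h
    exact ML.main k p (natDegree_le_iff_degree_le.mpr hdeg) h
  · rintro ⟨a, b, _, _, rfl⟩ x hx
    simp only [eval_add, eval_mul, eval_pow, eval_sub, eval_X, eval_one]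
    have h1 : 0 ≤ x * (1 - x) := mul_nonneg hx.1 (by linarith [hx.2])
    nlinarith [sq_nonneg (a.eval x), sq_nonneg (b.eval x)]
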